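/- arXiv:2408.17209 — 3 statements merged into one kernel-verified Lean document; each statement's English description precedes it below -/
import Mathlib

section
/- Let (Ω, μ) be a probability space, X : Ω → ℝ a square-integrable random variable with mean m = E[X], and A ⊆ Ω a measurable event. Define Y = X on A and Y = m on the complement of A (i.e., Y = 1_A·X + 1_{Aᶜ}·m). Then Var[Y] ≤ Var[X]. -/
open MeasureTheory ProbabilityTheory

lemma variance_add_const' {Ω : Type*} [MeasurableSpace Ω] {μ : Measure Ω}
    [IsProbabilityMeasure μ] {X : Ω → ℝ} (hX : Integrable X μ) (c : ℝ) :
    variance (fun ω => X ω + c) μ = variance X μ := by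
  unfold variance evariance
  congr 1
  refine lintegral_congr fun ω => ?_
  rw [integral_add hX (integrable_const c), integral_const]
  simp [measure_univ]

/-- **Variance reduction lemma.** Let `(Ω, μ)` be a probability space,
`X : Ω → ℝ` square-integrable with mean `m = E[X]`, and `A ⊆ Ω` a measurable
event. The random variable `Y = 1_A·X + 1_{Aᶜ}·m` (equal to `X` on `A` and to
the constant `m` off `A`) has variance at most that of `X`. -/
theorem variance_piecewise_mean_le {Ω : Type*} [MeasurableSpace Ω]
    (μ : Measure Ω) [IsProbabilityMeasure μ]
    (X : Ω → ℝ) (hX : MemLp X 2 μ) (A : Set Ω) (hA : MeasurableSet A) :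
    variance
        (fun ω => A.indicator X ω + Aᶜ.indicator (fun _ => ∫ x, X x ∂μ) ω) μ
      ≤ variance X μ := by
  set m := ∫ x, X x ∂μ with hm
  set Z := fun ω => A.indicator (fun ω => X ω - m) ω with hZ
  have hZmem : MemLp Z 2 μ := (hX.sub (memLp_const m)).indicator hA
  have hYZ : (fun ω => A.indicator X ω + Aᶜ.indicator (fun _ => m) ω)
      = fun ω => Z ω + m := by
    funext ω
    by_cases h : ω ∈ A <;>
      simp [hZ, Set.indicator_of_mem, Set.indicator_of_notMem, h]
  rw [hYZ, variance_add_const' (hZmem.integrable one_le_two)]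
  calc variance Z μ ≤ μ[Z ^ 2] := variance_le_expectation_sq hZmem.aestronglyMeasurable
    _ ≤ ∫ ω, (X ω - m)^2 ∂μ := by
        refine integral_mono ((hZmem.integrable_sq).congr ?_)
          ((hX.sub (memLp_const m)).integrable_sq.congr ?_) ?_
        · exact Filter.EventuallyEq.refl _ _
        · exact Filter.EventuallyEq.refl _ _
        · intro ω
          by_cases h : ω ∈ A <;>
            simp [hZ, Set.indicator_of_mem, Set.indicator_of_notMem, h, sq_nonneg]
    _ = variance X μ := by rw [variance_eq_integral hX.aestronglyMeasurable.aemeasurable]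
end

section
/- Var[est_hybrid] ≤ (1/b)·card²·(1/η − 1). That is, for any measurable event A ⊆ Ω (the event on which the algorithm returns the sampled estimate rather than performing an exact index execution), the hybrid estimator est_hybrid defined by est_hybrid(ω) = est(ω) for ω ∈ A and est_hybrid(ω) = card for ω ∉ A satisfies Var[est_hybrid] ≤ (1/b)·card²·(1/η − 1), where η = card/rSum and 1 ≤ card. -/
open MeasureTheory ProbabilityTheory

/-- The uniform probability measure on `Fin n` (for `0 < n`). -/
noncomputable abbrev uniformFin (n : ℕ) (hn : 0 < n) : Measure (Fin n) :=
  (PMF.uniformOfFinset (Finset.univ : Finset (Fin n))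
    ⟨⟨0, hn⟩, Finset.mem_univ _⟩).toMeasure

lemma unif_integral {rSum : ℕ} (hr : 0 < rSum) (g : Fin rSum → ℝ) :
    ∫ x, g x ∂(uniformFin rSum hr) = (rSum : ℝ)⁻¹ * ∑ x, g x := by
  rw [integral_fintype Integrable.of_finite]
  have h1 : ∀ x : Fin rSum, (uniformFin rSum hr) {x} = ((rSum : ENNReal))⁻¹ := by
    intro x
    rw [PMF.toMeasure_apply_singleton _ _ (measurableSet_singleton x),
      ]
    erw [PMF.uniformOfFinset_apply]
    simp [Finset.card_univ]
  simp_rw [Measure.real, h1]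
  simp [Finset.mul_sum, smul_eq_mul]

lemma pi_integral_one {rSum b : ℕ} (hr : 0 < rSum) (g : Fin rSum → ℝ) (i : Fin b) :
    ∫ ω : Fin b → Fin rSum, g (ω i) ∂(Measure.pi fun _ => uniformFin rSum hr)
      = ∫ x, g x ∂(uniformFin rSum hr) := by
  classical
  letI : MeasureSpace (Fin rSum) := ⟨uniformFin rSum hr⟩
  haveI : IsProbabilityMeasure (volume : Measure (Fin rSum)) :=
    PMF.toMeasure.isProbabilityMeasure _
  set f : Fin b → Fin rSum → ℝ := fun k => if k = i then g else fun _ => 1 with hf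
  have h1 : ∀ ω : Fin b → Fin rSum, g (ω i) = ∏ k, f k (ω k) := by
    intro ω
    have : ∀ k, f k (ω k) = if k = i then g (ω k) else 1 := by
      intro k; by_cases h : k = i <;> simp [hf, h]
    simp_rw [this]
    rw [Finset.prod_ite_eq' Finset.univ i (fun k => g (ω k))]
    simp
  have h2 := MeasureTheory.integral_fintype_prod_eq_prod (𝕜 := ℝ)
    (ι := Fin b) (E := fun _ : Fin b => Fin rSum) (μ := fun _ => (volume : Measure (Fin rSum))) f
  have hvol : (Measure.pi fun _ : Fin b => uniformFin rSum hr)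
      = (volume : Measure (Fin b → Fin rSum)) := rfl
  simp_rw [h1, hvol]
  erw [h2]
  have h3 : ∀ k, (∫ x, f k x) = if k = i then ∫ x, g x ∂(uniformFin rSum hr) else 1 := by
    intro k
    by_cases h : k = i <;> simp [hf, h] <;> rfl
  simp_rw [h3]
  rw [Finset.prod_ite_eq' Finset.univ i
    (fun _ => ∫ x, g x ∂(uniformFin rSum hr))]
  simp

lemma pi_integral_two {rSum b : ℕ} (hr : 0 < rSum) (g h : Fin rSum → ℝ) {i j : Fin b}
    (hij : i ≠ j) :
    ∫ ω : Fin b → Fin rSum, g (ω i) * h (ω j) ∂(Measure.pi fun _ => uniformFin rSum hr)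
      = (∫ x, g x ∂(uniformFin rSum hr)) * ∫ x, h x ∂(uniformFin rSum hr) := by
  classical
  letI : MeasureSpace (Fin rSum) := ⟨uniformFin rSum hr⟩
  haveI : IsProbabilityMeasure (volume : Measure (Fin rSum)) :=
    PMF.toMeasure.isProbabilityMeasure _
  set f : Fin b → Fin rSum → ℝ :=
    fun k => if k = i then g else if k = j then h else fun _ => 1 with hf
  have key : ∀ u : Fin b → ℝ, (∀ k, k ≠ i → k ≠ j → u k = 1) → ∏ k, u k = u i * u j := by
    intro u hu
    rw [← Finset.prod_erase_mul Finset.univ u (Finset.mem_univ j),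
      ← Finset.prod_erase_mul _ u (Finset.mem_erase.2 ⟨hij, Finset.mem_univ i⟩),
      Finset.prod_eq_one, one_mul]
    intro k hk
    simp only [Finset.mem_erase] at hk
    exact hu k hk.1 hk.2.1
  have h1 : ∀ ω : Fin b → Fin rSum, g (ω i) * h (ω j) = ∏ k, f k (ω k) := by
    intro ω
    rw [key (fun k => f k (ω k)) (by intro k hki hkj; simp [hf, hki, hkj])]
    simp [hf, hij.symm]
  have h2 := MeasureTheory.integral_fintype_prod_eq_prod (𝕜 := ℝ)
    (ι := Fin b) (E := fun _ : Fin b => Fin rSum) (μ := fun _ => (volume : Measure (Fin rSum))) f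
  have hvol : (Measure.pi fun _ : Fin b => uniformFin rSum hr)
      = (volume : Measure (Fin b → Fin rSum)) := rfl
  simp_rw [h1, hvol]
  erw [h2]
  rw [key (fun k => ∫ x, f k x) (by intro k hki hkj; simp [hf, hki, hkj])]
  simp [hf, hij.symm]
  rfl

/-- **Theorem 2 (variance, with hybrid estimation).** For any measurable event
`A` (on which the algorithm returns the sampled estimate, while off `A` an
exact index execution returns the true cardinality `card`), the hybrid
estimator `est_hybrid = 1_A·est + 1_{Aᶜ}·card` satisfies
`Var[est_hybrid] ≤ (1/b) * card² * (1/η − 1)` where `η = card / rSum`. -/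
theorem ice_hybrid_variance_le (rSum b card : ℕ) (hr : 0 < rSum) (hb : 0 < b)
    (hcard : 1 ≤ card) (S : Finset (Fin rSum)) (hS : S.card = card)
    (A : Set (Fin b → Fin rSum)) (hA : MeasurableSet A) :
    variance
        (fun ω : Fin b → Fin rSum =>
          A.indicator
            (fun ω' : Fin b → Fin rSum =>
              (((Finset.univ.filter fun i : Fin b => ω' i ∈ S).card : ℝ) / b) * rSum) ω
          + Aᶜ.indicator (fun _ => (card : ℝ)) ω)
        (Measure.pi fun _ : Fin b => uniformFin rSum hr)
      ≤ (1 / (b : ℝ)) * (card : ℝ) ^ 2 * (1 / ((card : ℝ) / (rSum : ℝ)) - 1) := by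
  classical
  haveI : IsProbabilityMeasure (uniformFin rSum hr) :=
    PMF.toMeasure.isProbabilityMeasure _
  set π : Measure (Fin b → Fin rSum) := Measure.pi fun _ : Fin b => uniformFin rSum hr with hπ
  haveI : IsProbabilityMeasure π := by rw [hπ]; infer_instance
  have hb' : (b : ℝ) ≠ 0 := Nat.cast_ne_zero.2 hb.ne'
  have hr' : (rSum : ℝ) ≠ 0 := Nat.cast_ne_zero.2 hr.ne'
  have hc' : (card : ℝ) ≠ 0 := Nat.cast_ne_zero.2 (by omega)
  set p : ℝ := (card : ℝ) / (rSum : ℝ) with hp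
  have hpc : (card : ℝ) = p * rSum := by rw [hp]; field_simp
  set Y : Fin rSum → ℝ := fun x => (if x ∈ S then 1 else 0) - p with hY
  set est : (Fin b → Fin rSum) → ℝ := fun ω' =>
    (((Finset.univ.filter fun i : Fin b => ω' i ∈ S).card : ℝ) / b) * rSum with hest
  set H : (Fin b → Fin rSum) → ℝ := fun ω =>
    A.indicator est ω + Aᶜ.indicator (fun _ => (card : ℝ)) ω with hH
  have hInt : ∀ f : (Fin b → Fin rSum) → ℝ, Integrable f π := fun f => Integrable.of_finite
  have hmeas : ∀ f : (Fin b → Fin rSum) → ℝ, AEStronglyMeasurable f π := fun f =>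
    (measurable_of_countable f).aestronglyMeasurable
  -- sum of indicator over rank space
  have hsum_ite : (∑ x : Fin rSum, if x ∈ S then (1 : ℝ) else 0) = card := by
    rw [Finset.sum_ite_mem]
    simp [hS]
  -- mean of Y is zero
  have hIY : ∫ x, Y x ∂(uniformFin rSum hr) = 0 := by
    rw [unif_integral]
    simp_rw [hY]
    rw [Finset.sum_sub_distrib, hsum_ite, Finset.sum_const, Finset.card_univ, Fintype.card_fin]
    rw [hpc]
    field_simp
    ring
  -- second moment of Y
  have hIY2 : ∫ x, Y x * Y x ∂(uniformFin rSum hr) = p - p ^ 2 := by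
    rw [unif_integral]
    have hpt : ∀ x : Fin rSum, Y x * Y x =
        ((if x ∈ S then (1 : ℝ) else 0) - 2 * p * (if x ∈ S then (1 : ℝ) else 0)) + p ^ 2 := by
      intro x
      by_cases h : x ∈ S <;> simp [hY, h] <;> ring
    simp_rw [hpt]
    rw [Finset.sum_add_distrib, Finset.sum_sub_distrib, hsum_ite, ← Finset.mul_sum, hsum_ite,
      Finset.sum_const, Finset.card_univ, Fintype.card_fin]
    rw [hpc]
    field_simp
    ring
  -- pointwise: est - card = (rSum/b) * sum of Y's
  have hZ : ∀ ω : Fin b → Fin rSum,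
      est ω - card = ((rSum : ℝ) / b) * ∑ i, Y (ω i) := by
    intro ω
    have hcount : ((Finset.univ.filter fun i : Fin b => ω i ∈ S).card : ℝ)
        = ∑ i, if ω i ∈ S then (1 : ℝ) else 0 := by
      rw [Finset.card_filter]
      push_cast
      rfl
    simp_rw [hY]
    rw [Finset.sum_sub_distrib, Finset.sum_const, Finset.card_univ, Fintype.card_fin, hest]
    simp only []
    rw [hcount, hpc]
    field_simp
    ring
  -- second moment of the centered sum
  have hEZ2 : ∫ ω, (∑ i, Y (ω i)) ^ 2 ∂π = b * (p - p ^ 2) := by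
    have hexp : ∀ ω : Fin b → Fin rSum,
        (∑ i, Y (ω i)) ^ 2 = ∑ i, ∑ j, Y (ω i) * Y (ω j) := by
      intro ω
      rw [sq, Finset.sum_mul_sum]
    simp_rw [hexp]
    rw [integral_finset_sum _ (fun i _ => Integrable.of_finite)]
    have hterm : ∀ i : Fin b,
        (∫ ω, ∑ j, Y (ω i) * Y (ω j) ∂π) = p - p ^ 2 := by
      intro i
      rw [integral_finset_sum _ (fun j _ => Integrable.of_finite)]
      have h1 : ∀ j : Fin b, (∫ ω, Y (ω i) * Y (ω j) ∂π)
          = if j = i then p - p ^ 2 else 0 := by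
        intro j
        by_cases h : j = i
        · subst h
          rw [if_pos rfl,
            show (∫ ω, Y (ω j) * Y (ω j) ∂π)
              = ∫ x, Y x * Y x ∂(uniformFin rSum hr) from
              pi_integral_one hr (fun x => Y x * Y x) j, hIY2]
        · rw [if_neg h,
            show (∫ ω, Y (ω i) * Y (ω j) ∂π)
              = (∫ x, Y x ∂(uniformFin rSum hr)) * ∫ x, Y x ∂(uniformFin rSum hr) from
              pi_integral_two hr Y Y (fun he => h he.symm), hIY]
          ring
      simp_rw [h1]
      rw [Finset.sum_ite_eq' Finset.univ i fun _ => p - p ^ 2]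
      simp
    simp_rw [hterm]
    rw [Finset.sum_const, Finset.card_univ, Fintype.card_fin]
    simp
  -- variance bound by second moment around card
  have hMem : MemLp H 2 π :=
    (memLp_two_iff_integrable_sq (hmeas H)).2 (hInt _)
  have step1 : variance H π ≤ ∫ ω, (H ω - card) ^ 2 ∂π := by
    rw [variance_eq_sub hMem]
    have hexp : ∫ ω, (H ω - card) ^ 2 ∂π
        = (∫ ω, H ω ^ 2 ∂π) - 2 * card * (∫ ω, H ω ∂π) + card ^ 2 := by
      have : ∀ ω, (H ω - card) ^ 2 = H ω ^ 2 - 2 * card * H ω + card ^ 2 := by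
        intro ω; ring
      simp_rw [this]
      rw [integral_add (hInt _) (integrable_const _),
        integral_sub (hInt _) (hInt _), integral_const_mul, integral_const]
      simp
    rw [hexp]
    have : (π[H ^ 2] : ℝ) = ∫ ω, H ω ^ 2 ∂π := rfl
    rw [this]
    nlinarith [sq_nonneg ((∫ ω, H ω ∂π) - card)]
  have step2 : ∫ ω, (H ω - card) ^ 2 ∂π ≤ ∫ ω, (est ω - card) ^ 2 ∂π := by
    apply integral_mono (hInt _) (hInt _)
    intro ω
    show (H ω - card) ^ 2 ≤ (est ω - card) ^ 2
    by_cases hω : ω ∈ A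
    · have h1 : H ω = est ω := by
        rw [hH]
        simp [Set.indicator_of_mem hω, Set.indicator_of_notMem (Set.notMem_compl_iff.2 hω)]
      rw [h1]
    · have h1 : H ω = card := by
        rw [hH]
        simp [Set.indicator_of_notMem hω, Set.indicator_of_mem (Set.mem_compl hω)]
      rw [h1]
      simpa using sq_nonneg (est ω - card)
  have step3 : ∫ ω, (est ω - card) ^ 2 ∂π = ((rSum : ℝ) / b) ^ 2 * (b * (p - p ^ 2)) := by
    simp_rw [hZ, mul_pow]
    rw [integral_const_mul, hEZ2]
  have step4 : ((rSum : ℝ) / b) ^ 2 * (b * (p - p ^ 2))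
      = (1 / (b : ℝ)) * (card : ℝ) ^ 2 * (1 / ((card : ℝ) / (rSum : ℝ)) - 1) := by
    rw [hp]
    field_simp
  calc variance H π ≤ ∫ ω, (H ω - card) ^ 2 ∂π := step1
    _ ≤ ∫ ω, (est ω - card) ^ 2 ∂π := step2
    _ = _ := by rw [step3, step4]
end

section
/- The Z-order encoding is monotone with respect to the coordinatewise (dominance) order: if x and y are tuples with x_i < 2^β and y_i < 2^β for all i < m, and x_i ≤ y_i for every i, then Z(x) ≤ Z(y). Consequently, for any query box with lower corner lo and upper corner hi, every tuple t with lo_i ≤ t_i ≤ hi_i for all i satisfies Z(lo) ≤ Z(t) ≤ Z(hi). -/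
/-- The Z-order (Morton) encoding of a tuple `x : Fin m → ℕ` with `β` bits per
attribute: `Z(x) = Σ_{j<β} Σ_{i<m} bit_j(x_i) · 2^(j·m + i)`, where
`bit_j(n) = n / 2^j % 2` is the `j`-th binary digit of `n`. -/
def zOrder (m β : ℕ) (x : Fin m → ℕ) : ℕ :=
  ∑ j ∈ Finset.range β, ∑ i : Fin m, (x i / 2 ^ j % 2) * 2 ^ (j * m + (i : ℕ))

/-- Bit-spreading function: `g m β n = Σ_{j<β} bit_j(n) · 2^(j·m)`. -/
def gSpread (m β n : ℕ) : ℕ :=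
  ∑ j ∈ Finset.range β, (n / 2 ^ j % 2) * 2 ^ (j * m)

lemma gSpread_succ (m β n : ℕ) :
    gSpread m (β + 1) n = 2 ^ m * gSpread m β (n / 2) + n % 2 := by
  rw [gSpread, Finset.sum_range_succ', gSpread, Finset.mul_sum]
  congr 1
  · apply Finset.sum_congr rfl
    intro j _
    have h1 : n / 2 ^ (j + 1) = n / 2 / 2 ^ j := by
      rw [Nat.div_div_eq_div_mul, ← pow_succ']
    rw [h1]
    ring
  · simp

lemma gSpread_strictMono (m : ℕ) (hm : 0 < m) :
    ∀ β a b : ℕ, a < b → b < 2 ^ β → gSpread m β a < gSpread m β b := by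
  intro β
  induction β with
  | zero => intro a b hab hb; omega
  | succ β ih =>
    intro a b hab hb
    have ha2 := Nat.div_add_mod a 2
    have hb2 := Nat.div_add_mod b 2
    have ham : a % 2 < 2 := Nat.mod_lt _ (by norm_num)
    have hbm : b % 2 < 2 := Nat.mod_lt _ (by norm_num)
    rw [gSpread_succ, gSpread_succ]
    rcases eq_or_lt_of_le (Nat.div_le_div_right (le_of_lt hab) (c := 2)) with h | h
    · have : a % 2 < b % 2 := by omega
      rw [h]; omega
    · have hb2β : b / 2 < 2 ^ β := by
        rw [pow_succ] at hb
        exact Nat.div_lt_of_lt_mul (by omega)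
      have hg := ih (a / 2) (b / 2) h hb2β
      have h2m : 2 ≤ 2 ^ m := by
        calc 2 = 2 ^ 1 := (pow_one 2).symm
        _ ≤ 2 ^ m := Nat.pow_le_pow_right (by norm_num) hm
      have key : 2 ^ m * (gSpread m β (a / 2) + 1) ≤ 2 ^ m * gSpread m β (b / 2) :=
        Nat.mul_le_mul_left _ hg
      rw [Nat.mul_add, Nat.mul_one] at key
      omega

lemma gSpread_mono (m : ℕ) (hm : 0 < m) (β a b : ℕ) (hab : a ≤ b)
    (hb : b < 2 ^ β) : gSpread m β a ≤ gSpread m β b := by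
  rcases eq_or_lt_of_le hab with h | h
  · rw [h]
  · exact le_of_lt (gSpread_strictMono m hm β a b h hb)

lemma zOrder_eq (m β : ℕ) (x : Fin m → ℕ) :
    zOrder m β x = ∑ i : Fin m, gSpread m β (x i) * 2 ^ (i : ℕ) := by
  rw [zOrder, Finset.sum_comm]
  apply Finset.sum_congr rfl
  intro i _
  rw [gSpread, Finset.sum_mul]
  apply Finset.sum_congr rfl
  intro j _
  rw [pow_add]
  ring

/-- **Monotonicity of the Z-order encoding.** If `x` and `y` are tuples with
all coordinates below `2^β` and `x_i ≤ y_i` for every `i`, then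
`Z(x) ≤ Z(y)`. Consequently, for any query box with lower corner `lo` and
upper corner `hi`, every tuple `t` in the box satisfies
`Z(lo) ≤ Z(t) ≤ Z(hi)`. -/
theorem zOrder_monotone (m β : ℕ) (hm : 0 < m) (hβ : 0 < β) :
    (∀ x y : Fin m → ℕ, (∀ i, x i < 2 ^ β) → (∀ i, y i < 2 ^ β) →
      (∀ i, x i ≤ y i) → zOrder m β x ≤ zOrder m β y) ∧
    (∀ lo hi t : Fin m → ℕ, (∀ i, lo i < 2 ^ β) → (∀ i, hi i < 2 ^ β) →
      (∀ i, t i < 2 ^ β) → (∀ i, lo i ≤ t i ∧ t i ≤ hi i) →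
      zOrder m β lo ≤ zOrder m β t ∧ zOrder m β t ≤ zOrder m β hi) := by
  have main : ∀ x y : Fin m → ℕ, (∀ i, y i < 2 ^ β) →
      (∀ i, x i ≤ y i) → zOrder m β x ≤ zOrder m β y := by
    intro x y hy hxy
    rw [zOrder_eq, zOrder_eq]
    apply Finset.sum_le_sum
    intro i _
    exact Nat.mul_le_mul_right _ (gSpread_mono m hm β _ _ (hxy i) (hy i))
  refine ⟨fun x y _ hy hxy => main x y hy hxy, fun lo hi t _ hhi ht hbox => ?_⟩
  exact ⟨main lo t ht (fun i => (hbox i).1), main t hi hhi (fun i => (hbox i).2)⟩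
end
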